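/- For any digit a₀ ∈ {0,…,9} and any real θ, |Σ_{0≤n<10, n≠a₀} e(nθ)| ≤ 7 + 2·exp(−‖θ‖²) ≤ 9·exp(−‖θ‖²/10), where ‖θ‖ is the distance from θ to the nearest integer. -/

import Mathlib

/-- `e(x) = exp(2πix)`. -/
noncomputable def e (x : ℝ) : ℂ := Complex.exp (2 * Real.pi * Complex.I * x)

/-- Distance from a real number to the nearest integer. -/
noncomputable def nint (θ : ℝ) : ℝ := ⨅ m : ℤ, |θ - (m : ℝ)|

lemma round_min (θ : ℝ) (m : ℤ) : |θ - round θ| ≤ |θ - m| := by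
  rcases eq_or_ne m (round θ) with h | h
  · rw [h]
  · have h1 : (1 : ℝ) ≤ |(round θ : ℝ) - m| := by
      have : (1 : ℤ) ≤ |round θ - m| := Int.one_le_abs (sub_ne_zero.2 (Ne.symm h))
      calc (1:ℝ) = ((1:ℤ):ℝ) := by norm_num
        _ ≤ |((round θ - m : ℤ) : ℝ)| := by rw [← Int.cast_abs]; exact_mod_cast this
        _ = |(round θ : ℝ) - m| := by push_cast; ring_nf
    have h2 : |θ - round θ| ≤ 1/2 := abs_sub_round θ
    have h3 : |(round θ : ℝ) - m| ≤ |θ - round θ| + |θ - m| := by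
      calc |(round θ : ℝ) - m| = |(θ - m) - (θ - round θ)| := by ring_nf
      _ ≤ |θ - m| + |θ - round θ| := abs_sub _ _
      _ = _ := add_comm _ _
    linarith

lemma nint_eq_round (θ : ℝ) : nint θ = |θ - round θ| := by
  refine le_antisymm ?_ ?_
  · exact ciInf_le ⟨0, fun x ⟨m, hm⟩ => hm ▸ abs_nonneg _⟩ (round θ)
  · exact le_ciInf (round_min θ)

lemma nint_nonneg (θ : ℝ) : 0 ≤ nint θ := by rw [nint_eq_round]; exact abs_nonneg _

lemma nint_le_half (θ : ℝ) : nint θ ≤ 1/2 := by rw [nint_eq_round]; exact abs_sub_round θ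

lemma abs_cos_le (θ : ℝ) : |Real.cos (Real.pi * θ)| ≤ Real.exp (-(nint θ)^2) := by
  set t := nint θ with ht
  have ht0 : 0 ≤ t := nint_nonneg θ
  have ht2 : t ≤ 1/2 := nint_le_half θ
  have hπ : (0:ℝ) < Real.pi := Real.pi_pos
  -- reduce to cos (π t)
  have hcos : |Real.cos (Real.pi * θ)| = Real.cos (Real.pi * t) := by
    have hδ : Real.cos (Real.pi * θ) = (-1:ℝ)^(round θ) * Real.cos (Real.pi * (θ - round θ)) := by
      have h0 : Real.pi * θ = Real.pi * (θ - round θ) + (round θ : ℝ) * Real.pi := by ring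
      rw [h0, Real.cos_add_int_mul_pi]
    have habs1 : |(-1:ℝ)^(round θ)| = 1 := by
      rcases Int.even_or_odd (round θ) with he | ho
      · rw [he.neg_one_zpow]; norm_num
      · rw [Odd.neg_one_zpow ho]; norm_num
    rw [hδ, abs_mul, habs1, one_mul]
    have : Real.cos (Real.pi * (θ - round θ)) = Real.cos (Real.pi * t) := by
      rw [ht, nint_eq_round, ← Real.cos_abs, abs_mul, abs_of_pos hπ]
    rw [this]
    refine abs_of_nonneg (Real.cos_nonneg_of_mem_Icc ⟨by nlinarith, by nlinarith⟩)
  rw [hcos]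
  have hsin : t ≤ Real.sin (Real.pi * t / 2) := by
    have := Real.mul_le_sin (x := Real.pi * t / 2) (by positivity) (by nlinarith)
    calc t = 2 / Real.pi * (Real.pi * t / 2) := by field_simp
    _ ≤ _ := this
  have hcos2 : Real.cos (Real.pi * t) = 1 - 2 * Real.sin (Real.pi * t / 2)^2 := by
    have hc := Real.cos_sq (Real.pi * t / 2)
    rw [show 2 * (Real.pi * t / 2) = Real.pi * t from by ring] at hc
    have h2 := Real.sin_sq_add_cos_sq (Real.pi * t / 2)
    nlinarith
  have hexp : 1 - t^2 ≤ Real.exp (-t^2) := by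
    have := Real.add_one_le_exp (-t^2); linarith
  nlinarith [Real.sin_nonneg_of_nonneg_of_le_pi (x := Real.pi * t / 2) (by positivity) (by nlinarith)]

lemma e_abs (x : ℝ) : ‖e x‖ = 1 := by
  rw [e, Complex.norm_exp]
  have : (2 * ↑Real.pi * Complex.I * ↑x).re = 0 := by simp [Complex.mul_re, Complex.mul_im]
  rw [this, Real.exp_zero]

lemma pair_bound (n : ℕ) (θ : ℝ) :
    ‖e ((n : ℝ) * θ) + e (((n+1 : ℕ) : ℝ) * θ)‖ ≤ 2 * Real.exp (-(nint θ)^2) := by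
  have hsplit : e (((n+1 : ℕ) : ℝ) * θ) = e ((n:ℝ) * θ) * e θ := by
    rw [e, e, e, ← Complex.exp_add]
    push_cast
    ring_nf
  have hfac : e ((n : ℝ) * θ) + e (((n+1 : ℕ) : ℝ) * θ) = e ((n:ℝ) * θ) * (1 + e θ) := by
    rw [hsplit]; ring
  rw [hfac, norm_mul, e_abs, one_mul]
  have hone : (1 : ℂ) + e θ = Complex.exp (Real.pi * Complex.I * θ) * (2 * Complex.cos (Real.pi * θ)) := by
    rw [Complex.two_cos, e, mul_add, ← Complex.exp_add, ← Complex.exp_add,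
      show (↑Real.pi * Complex.I * ↑θ + ↑Real.pi * ↑θ * Complex.I) = 2 * ↑Real.pi * Complex.I * ↑θ from by ring,
      show (↑Real.pi * Complex.I * ↑θ + -(↑Real.pi * ↑θ) * Complex.I) = 0 from by ring,
      Complex.exp_zero]
    ring
  rw [hone, norm_mul, Complex.norm_exp]
  have hre : (↑Real.pi * Complex.I * ↑θ).re = 0 := by simp [Complex.mul_re, Complex.mul_im]
  rw [hre, Real.exp_zero, one_mul, norm_mul]
  have : ‖Complex.cos (Real.pi * θ)‖ = |Real.cos (Real.pi * θ)| := by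
    rw [← Complex.ofReal_mul, ← Complex.ofReal_cos, Complex.norm_real, Real.norm_eq_abs]
  rw [this]
  simp only [Complex.norm_ofNat]
  have := abs_cos_le θ
  nlinarith [abs_nonneg (Real.cos (Real.pi * θ))]

theorem stmt_3 (a₀ : ℕ) (ha : a₀ ≤ 9) (θ : ℝ) :
    ‖∑ n ∈ (Finset.range 10).filter (fun n => n ≠ a₀), e ((n : ℝ) * θ)‖
      ≤ 7 + 2 * Real.exp (-(nint θ)^2) ∧
    7 + 2 * Real.exp (-(nint θ)^2) ≤ 9 * Real.exp (-(nint θ)^2 / 10) := by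
  set T : Finset ℕ := (Finset.range 10).filter (fun n => n ≠ a₀) with hT
  have hTe : T = (Finset.range 10).erase a₀ := by
    rw [hT, Finset.filter_ne']
  have hcard : T.card = 9 := by
    rw [hTe, Finset.card_erase_of_mem (Finset.mem_range.2 (by omega)), Finset.card_range]
  constructor
  · -- choose pair p, p+1 both in T
    obtain ⟨p, hp, hp1⟩ : ∃ p : ℕ, p ∈ T ∧ p + 1 ∈ T := by
      by_cases h : a₀ ≤ 4
      · exact ⟨8, by simp [hTe, Finset.mem_erase]; omega, by simp [hTe, Finset.mem_erase]; omega⟩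
      · exact ⟨0, by simp [hTe, Finset.mem_erase]; omega, by simp [hTe, Finset.mem_erase]; omega⟩
    have hsub : ({p, p+1} : Finset ℕ) ⊆ T := by
      intro x hx
      simp only [Finset.mem_insert, Finset.mem_singleton] at hx
      rcases hx with h | h <;> simp [h, hp, hp1]
    have hsum := Finset.sum_sdiff (f := fun n : ℕ => e ((n : ℝ) * θ)) hsub
    rw [← hsum]
    have hpairsum : ∑ n ∈ ({p, p+1} : Finset ℕ), e ((n : ℝ) * θ)
        = e ((p : ℝ) * θ) + e (((p+1 : ℕ) : ℝ) * θ) := by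
      rw [Finset.sum_pair (by omega)]
    have hcard2 : (T \ {p, p+1}).card = 7 := by
      rw [Finset.card_sdiff_of_subset hsub, hcard, Finset.card_insert_of_notMem (by simp),
        Finset.card_singleton]
    calc ‖∑ n ∈ T \ {p, p+1}, e ((n : ℝ) * θ) + ∑ n ∈ ({p, p+1} : Finset ℕ), e ((n : ℝ) * θ)‖
        ≤ ‖∑ n ∈ T \ {p, p+1}, e ((n : ℝ) * θ)‖
          + ‖∑ n ∈ ({p, p+1} : Finset ℕ), e ((n : ℝ) * θ)‖ := by
          exact norm_add_le _ _
      _ ≤ 7 + 2 * Real.exp (-(nint θ)^2) := by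
          gcongr
          · calc ‖∑ n ∈ T \ {p, p+1}, e ((n : ℝ) * θ)‖
                ≤ ∑ n ∈ T \ {p, p+1}, ‖e ((n : ℝ) * θ)‖ := by
                  exact norm_sum_le _ _
              _ = ∑ n ∈ T \ {p, p+1}, (1:ℝ) := by
                  exact Finset.sum_congr rfl (fun n _ => e_abs _)
              _ = 7 := by rw [Finset.sum_const, hcard2]; norm_num
          · rw [hpairsum]; exact pair_bound p θ
  · -- second inequality
    set s := (nint θ)^2 with hs
    have hs0 : 0 ≤ s := sq_nonneg _
    have hs4 : s ≤ 1/4 := by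
      have h1 := nint_le_half θ
      have h2 := nint_nonneg θ
      rw [hs]; nlinarith
    have h1 : Real.exp (-s) * (1 + s) ≤ 1 := by
      have hx := Real.add_one_le_exp s
      have hmul : Real.exp (-s) * Real.exp s = 1 := by rw [← Real.exp_add]; simp
      nlinarith [(Real.exp_pos (-s)).le]
    have h2 : 1 - s/10 ≤ Real.exp (-s/10) := by
      have := Real.add_one_le_exp (-s/10); linarith
    have h3 : Real.exp (-s) ≤ 1 - 9*s/20 := by
      have hpos : (0:ℝ) < 1 + s := by linarith
      have : Real.exp (-s) ≤ 1 / (1+s) := by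
        rw [le_div_iff₀ hpos]; exact h1
      have h4 : 1 / (1+s) ≤ 1 - 9*s/20 := by
        rw [div_le_iff₀ hpos]; nlinarith
      linarith
    linarith
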